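/- Let 0 < k² < 1/3, a = 2(1−k²), b = 4k², and define the Fourier symbol M̂(ξ,η) = (ξ²+η²)/(ξ²+η² − (b/a)ξ²) − bξ²/((ξ²+η²+a)(ξ²+η² − (b/a)ξ²)) for (ξ,η) ≠ (0,0), with M̂(0,0) = a/(a) appropriately defined by the limit. Then sup_{(ξ,η)∈ℝ²} (|M̂(ξ,η)| + |M̂(ξ,η)^{-1}|) < ∞. -/

import Mathlib

/-- The Fourier symbol `M̂` of the multiplier `𝓜`, with `a = 2(1-k²)`, `b = 4k²`,
defined at the origin by its limit value `1`. -/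
noncomputable def Mhat (k ξ η : ℝ) : ℝ :=
  if (ξ, η) = (0, 0) then 1 else
    (ξ ^ 2 + η ^ 2) / (ξ ^ 2 + η ^ 2 - (4 * k ^ 2 / (2 * (1 - k ^ 2))) * ξ ^ 2) -
      (4 * k ^ 2) * ξ ^ 2 /
        ((ξ ^ 2 + η ^ 2 + 2 * (1 - k ^ 2)) *
          (ξ ^ 2 + η ^ 2 - (4 * k ^ 2 / (2 * (1 - k ^ 2))) * ξ ^ 2))

/-- For `0 < k² < 1/3`, `sup_{(ξ,η)∈ℝ²} (|M̂(ξ,η)| + |M̂(ξ,η)⁻¹|) < ∞`. -/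
theorem Mhat_bounded (k : ℝ) (hk0 : 0 < k ^ 2) (hk : k ^ 2 < 1 / 3) :
    ∃ C : ℝ, ∀ ξ η : ℝ, |Mhat k ξ η| + |(Mhat k ξ η)⁻¹| ≤ C := by
  have hk1 : k ^ 2 < 1 := by linarith
  set a : ℝ := 2 * (1 - k ^ 2) with ha_def
  set b : ℝ := 4 * k ^ 2 with hb_def
  have ha : 0 < a := by simp only [ha_def]; nlinarith
  have hb : 0 < b := by simp only [hb_def]; nlinarith
  have hab : b < a := by simp only [ha_def, hb_def]; nlinarith
  set c : ℝ := b / a with hc_def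
  have hc0 : 0 < c := div_pos hb ha
  have hc1 : c < 1 := (div_lt_one ha).mpr hab
  refine ⟨1 / (1 - c) + a / (a - b), fun ξ η => ?_⟩
  have h1c : (0:ℝ) < 1 - c := by linarith
  have hone : (1:ℝ) ≤ 1 / (1 - c) := by
    rw [le_div_iff₀ h1c]; linarith
  have htwo : (1:ℝ) ≤ a / (a - b) := by
    rw [le_div_iff₀ (by linarith : (0:ℝ) < a - b)]; linarith
  by_cases h : (ξ, η) = ((0:ℝ), (0:ℝ))
  · have hone' : (1:ℝ) ≤ (1 - c)⁻¹ := by rw [← one_div]; exact hone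
    simp [Mhat, h]
    linarith
  · have hr : 0 < ξ ^ 2 + η ^ 2 := by
      rcases Prod.mk.injEq .. ▸ h with h'
      rw [not_and_or] at h'
      rcases h' with h' | h' <;> positivity
    set r : ℝ := ξ ^ 2 + η ^ 2 with hr_def
    have hx : ξ ^ 2 ≤ r := by simp only [hr_def]; nlinarith
    have hD : (1 - c) * r ≤ r - c * ξ ^ 2 := by nlinarith
    have hDpos : 0 < r - c * ξ ^ 2 := lt_of_lt_of_le (by positivity) hD
    have hDle : r - c * ξ ^ 2 ≤ r := by nlinarith
    have hra : 0 < r + a := by linarith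
    have hm : Mhat k ξ η = (r ^ 2 + a * r - b * ξ ^ 2) / ((r + a) * (r - c * ξ ^ 2)) := by
      rw [Mhat, if_neg h]
      simp only [← hr_def, ← ha_def, ← hb_def, ← hc_def]
      field_simp
    have hNlow : (a - b) / a * ((r + a) * (r - c * ξ ^ 2)) ≤ r ^ 2 + a * r - b * ξ ^ 2 := by
      rw [div_mul_eq_mul_div, div_le_iff₀ ha]
      have h1 : (a - b) * ((r + a) * (r - c * ξ ^ 2)) ≤ (a - b) * ((r + a) * r) := by
        apply mul_le_mul_of_nonneg_left _ (by linarith)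
        exact mul_le_mul_of_nonneg_left hDle (le_of_lt hra)
      have h2 : (a - b) * ((r + a) * r) ≤ (r ^ 2 + a * r - b * ξ ^ 2) * a := by
        nlinarith [mul_le_mul_of_nonneg_left hx (le_of_lt hb)]
      linarith
    have hNhigh : r ^ 2 + a * r - b * ξ ^ 2 ≤ 1 / (1 - c) * ((r + a) * (r - c * ξ ^ 2)) := by
      rw [div_mul_eq_mul_div, le_div_iff₀ h1c, one_mul]
      have h1 : (r + a) * ((1 - c) * r) ≤ (r + a) * (r - c * ξ ^ 2) :=
        mul_le_mul_of_nonneg_left hD (le_of_lt hra)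
      have h2 : (r ^ 2 + a * r - b * ξ ^ 2) * (1 - c) ≤ (r ^ 2 + a * r) * (1 - c) := by
        apply mul_le_mul_of_nonneg_right _ (le_of_lt h1c)
        have hbx : 0 ≤ b * ξ ^ 2 := by positivity
        linarith
      have h3 : (r ^ 2 + a * r) * (1 - c) = (r + a) * ((1 - c) * r) := by ring
      linarith
    have hden : 0 < (r + a) * (r - c * ξ ^ 2) := mul_pos hra hDpos
    have hlow : (a - b) / a ≤ Mhat k ξ η := by
      rw [hm, le_div_iff₀ hden]; exact hNlow
    have hhigh : Mhat k ξ η ≤ 1 / (1 - c) := by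
      rw [hm, div_le_iff₀ hden]; exact hNhigh
    have hmpos : 0 < Mhat k ξ η :=
      lt_of_lt_of_le (div_pos (by linarith) ha) hlow
    have hinv : (Mhat k ξ η)⁻¹ ≤ a / (a - b) := by
      have : (Mhat k ξ η)⁻¹ ≤ ((a - b) / a)⁻¹ := by
        apply inv_anti₀ (div_pos (by linarith) ha) hlow
      rwa [inv_div] at this
    rw [abs_of_pos hmpos, abs_of_pos (inv_pos.mpr hmpos)]
    linarith
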